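/- Let L be a loss bounded by ℓ, and for a predictor f let L(f(x)) ∈ ℝ^K denote the vector of losses over labels. Suppose R_tar(f, D) = (1/n) ∑_i q_tar(x_i)ᵀ L(f(x_i)) with x_i i.i.d., and R(f) = E_x[ q*(x)ᵀ L(f(x)) ]. Then E_D[(R_tar(f,D) - R(f))²] ≤ (1/n) Var_x[q_tar(x)ᵀ L(f(x))] + ℓ² K (E_x ‖q_tar(x) - q*(x)‖₂)². -/

import Mathlib

open MeasureTheory ProbabilityTheory

/-- E[(Z-c)²] = Var Z + (E Z - c)² for L² random variables on a probability space. -/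
lemma integral_sub_const_sq_eq {Ω : Type*} [MeasurableSpace Ω] (P : Measure Ω)
    [IsProbabilityMeasure P] (Z : Ω → ℝ) (hZ : MemLp Z 2 P) (c : ℝ) :
    ∫ ω, (Z ω - c) ^ 2 ∂P = variance Z P + (∫ ω, Z ω ∂P - c) ^ 2 := by
  have h1 : Integrable Z P := hZ.integrable one_le_two
  have h2 : Integrable (fun ω => Z ω ^ 2) P := hZ.integrable_sq
  have hexp : ∀ ω, (Z ω - c) ^ 2 = Z ω ^ 2 - 2 * c * Z ω + c ^ 2 := fun ω => by ring
  simp_rw [hexp]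
  have h3 : Integrable (fun ω => Z ω ^ 2 - 2 * c * Z ω) P := h2.sub (h1.const_mul _)
  rw [integral_add h3 (integrable_const _),
    integral_sub h2 (h1.const_mul _), integral_const_mul, integral_const,
    variance_eq_sub hZ]
  simp only [measure_univ, ENNReal.toReal_one, probReal_univ, smul_eq_mul, one_mul, Pi.pow_apply]
  ring

/-- Variance-bias bound for the target-risk estimator, L2 version:
`E_D[(R_tar(f,D) - R(f))²] ≤ (1/n) Var_x[q_tarᵀL] + ℓ²K (E_x‖q_tar - q*‖₂)²`. -/
theorem risk_estimate_bound_l2 {Ω α : Type*} [MeasurableSpace Ω] [MeasurableSpace α]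
    (P : Measure Ω) [IsProbabilityMeasure P] (μ : Measure α) [IsProbabilityMeasure μ]
    (n K : ℕ) (hn : 0 < n) (hK : 1 ≤ K)
    (X : Fin n → Ω → α) (hXmeas : ∀ i, Measurable (X i))
    (hiid : iIndepFun X P)
    (hdist : ∀ i, P.map (X i) = μ)
    (ℓ : ℝ) (hℓ : 0 ≤ ℓ)
    (qtar qstar L : α → Fin K → ℝ)
    (hqtar_meas : ∀ k, Measurable fun x => qtar x k)
    (hqstar_meas : ∀ k, Measurable fun x => qstar x k)
    (hL_meas : ∀ k, Measurable fun x => L x k)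
    (hqtar_nonneg : ∀ x k, 0 ≤ qtar x k) (hqtar_sum : ∀ x, ∑ k, qtar x k = 1)
    (hqstar_nonneg : ∀ x k, 0 ≤ qstar x k) (hqstar_sum : ∀ x, ∑ k, qstar x k = 1)
    (hLbound : ∀ x k, L x k ∈ Set.Icc (0 : ℝ) ℓ) :
    ∫ ω, ((n : ℝ)⁻¹ * (∑ i, ∑ k, qtar (X i ω) k * L (X i ω) k)
        - ∫ x, ∑ k, qstar x k * L x k ∂μ) ^ 2 ∂P
      ≤ (n : ℝ)⁻¹ * variance (fun x => ∑ k, qtar x k * L x k) μ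
        + ℓ ^ 2 * K * (∫ x, Real.sqrt (∑ k, (qtar x k - qstar x k) ^ 2) ∂μ) ^ 2 := by
  classical
  have hn' : (n : ℝ) ≠ 0 := Nat.cast_ne_zero.mpr hn.ne'
  set g : α → ℝ := fun x => ∑ k, qtar x k * L x k with hgdef
  set h : α → ℝ := fun x => ∑ k, qstar x k * L x k with hhdef
  have hgmeas : Measurable g :=
    Finset.measurable_sum _ fun k _ => (hqtar_meas k).mul (hL_meas k)
  have hhmeas : Measurable h :=
    Finset.measurable_sum _ fun k _ => (hqstar_meas k).mul (hL_meas k)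
  have habs : ∀ (q : α → Fin K → ℝ), (∀ x k, 0 ≤ q x k) → (∀ x, ∑ k, q x k = 1) →
      ∀ x, |∑ k, q x k * L x k| ≤ ℓ := by
    intro q hq0 hq1 x
    have h0 : 0 ≤ ∑ k, q x k * L x k :=
      Finset.sum_nonneg fun k _ => mul_nonneg (hq0 x k) (hLbound x k).1
    rw [abs_of_nonneg h0]
    calc ∑ k, q x k * L x k ≤ ∑ k, q x k * ℓ :=
          Finset.sum_le_sum fun k _ => mul_le_mul_of_nonneg_left (hLbound x k).2 (hq0 x k)
      _ = ℓ := by rw [← Finset.sum_mul, hq1 x, one_mul]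
  have hgabs : ∀ x, |g x| ≤ ℓ := habs qtar hqtar_nonneg hqtar_sum
  have hhabs : ∀ x, |h x| ≤ ℓ := habs qstar hqstar_nonneg hqstar_sum
  have hgL2 : MemLp g 2 μ :=
    MemLp.of_bound hgmeas.aestronglyMeasurable ℓ (ae_of_all _ hgabs)
  -- transfer integrals along the distribution
  have hint : ∀ (φ : α → ℝ), Measurable φ → ∀ i, ∫ ω, φ (X i ω) ∂P = ∫ x, φ x ∂μ := by
    intro φ hφ i
    rw [← hdist i, integral_map (hXmeas i).aemeasurable hφ.aestronglyMeasurable]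
  -- the sample random variables
  set Y : Fin n → Ω → ℝ := fun i ω => g (X i ω) with hYdef
  have hYmeas : ∀ i, Measurable (Y i) := fun i => hgmeas.comp (hXmeas i)
  have hYL2 : ∀ i, MemLp (Y i) 2 P := fun i =>
    MemLp.of_bound (hYmeas i).aestronglyMeasurable ℓ (ae_of_all _ fun ω => hgabs _)
  have hYmean : ∀ i, ∫ ω, Y i ω ∂P = ∫ x, g x ∂μ := fun i => hint g hgmeas i
  have hYvar : ∀ i, variance (Y i) P = variance g μ := by
    intro i
    rw [variance_eq_sub (hYL2 i), variance_eq_sub hgL2]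
    simp only [Pi.pow_apply]
    rw [hint (fun x => g x ^ 2) (hgmeas.pow_const 2) i, hYmean i]
  -- variance of the empirical mean
  set Z : Ω → ℝ := fun ω => (n : ℝ)⁻¹ * ∑ i, Y i ω with hZdef
  have hZmeas : Measurable Z := (Finset.measurable_sum _ fun i _ => hYmeas i).const_mul _
  have hZabs : ∀ ω, |Z ω| ≤ ℓ := by
    intro ω
    have : |∑ i, Y i ω| ≤ (n : ℝ) * ℓ := by
      calc |∑ i, Y i ω| ≤ ∑ i, |Y i ω| := Finset.abs_sum_le_sum_abs _ _
        _ ≤ ∑ _i : Fin n, ℓ := Finset.sum_le_sum fun i _ => hgabs _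
        _ = (n : ℝ) * ℓ := by simp [mul_comm]
    calc |Z ω| = (n : ℝ)⁻¹ * |∑ i, Y i ω| := by
          rw [hZdef, abs_mul, abs_of_nonneg (by positivity)]
      _ ≤ (n : ℝ)⁻¹ * ((n : ℝ) * ℓ) := by
          exact mul_le_mul_of_nonneg_left this (by positivity)
      _ = ℓ := by field_simp
  have hZL2 : MemLp Z 2 P :=
    MemLp.of_bound hZmeas.aestronglyMeasurable ℓ (ae_of_all _ hZabs)
  have hsum_eq : (fun ω => ∑ i, Y i ω) = ∑ i, Y i := by
    funext ω; simp [Finset.sum_apply]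
  have hSvar : variance (fun ω => ∑ i, Y i ω) P = (n : ℝ) * variance g μ := by
    rw [hsum_eq, IndepFun.variance_sum (fun i _ => hYL2 i)
      (fun i _ j _ hij => (hiid.indepFun hij).comp hgmeas hgmeas)]
    simp [hYvar, mul_comm]
  have hZvar : variance Z P = (n : ℝ)⁻¹ * variance g μ := by
    rw [hZdef]
    rw [variance_const_mul ((n : ℝ)⁻¹) (fun ω => ∑ i, Y i ω) P, hSvar]
    field_simp
  have hZmean : ∫ ω, Z ω ∂P = ∫ x, g x ∂μ := by
    rw [hZdef]
    rw [integral_const_mul, integral_finset_sum _ fun i _ => (hYL2 i).integrable one_le_two]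
    simp only [hYmean]
    rw [Finset.sum_const, Finset.card_univ, Fintype.card_fin, nsmul_eq_mul]
    field_simp
  -- rewrite LHS
  have hLHS : ∫ ω, ((n : ℝ)⁻¹ * (∑ i, ∑ k, qtar (X i ω) k * L (X i ω) k)
      - ∫ x, ∑ k, qstar x k * L x k ∂μ) ^ 2 ∂P
      = (n : ℝ)⁻¹ * variance g μ + (∫ x, g x ∂μ - ∫ x, h x ∂μ) ^ 2 := by
    have := integral_sub_const_sq_eq P Z hZL2 (∫ x, h x ∂μ)
    rw [hZmean, hZvar] at this
    exact this
  rw [hLHS]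
  -- bias term
  have hΔmeas : Measurable (fun x => Real.sqrt (∑ k, (qtar x k - qstar x k) ^ 2)) :=
    (Finset.measurable_sum _ fun k _ =>
      ((hqtar_meas k).sub (hqstar_meas k)).pow_const 2).sqrt
  have hq_le_one : ∀ (q : α → Fin K → ℝ), (∀ x k, 0 ≤ q x k) → (∀ x, ∑ k, q x k = 1) →
      ∀ x k, q x k ≤ 1 := by
    intro q hq0 hq1 x k
    calc q x k ≤ ∑ j, q x j := Finset.single_le_sum (fun j _ => hq0 x j) (Finset.mem_univ k)
      _ = 1 := hq1 x
  have hΔbound : ∀ x, Real.sqrt (∑ k, (qtar x k - qstar x k) ^ 2) ≤ 2 * Real.sqrt K := by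
    intro x
    have : ∑ k, (qtar x k - qstar x k) ^ 2 ≤ ∑ _k : Fin K, (4 : ℝ) := by
      refine Finset.sum_le_sum fun k _ => ?_
      have h1 : |qtar x k - qstar x k| ≤ 2 := by
        have := hq_le_one qtar hqtar_nonneg hqtar_sum x k
        have := hq_le_one qstar hqstar_nonneg hqstar_sum x k
        have := hqtar_nonneg x k
        have := hqstar_nonneg x k
        rw [abs_le]; constructor <;> linarith
      calc (qtar x k - qstar x k) ^ 2 = |qtar x k - qstar x k| ^ 2 := (sq_abs _).symm
        _ ≤ 2 ^ 2 := pow_le_pow_left₀ (abs_nonneg _) h1 2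
        _ = 4 := by norm_num
    calc Real.sqrt (∑ k, (qtar x k - qstar x k) ^ 2) ≤ Real.sqrt (∑ _k : Fin K, (4 : ℝ)) :=
          Real.sqrt_le_sqrt this
      _ = Real.sqrt (4 * K) := by rw [Finset.sum_const]; ring_nf; norm_num [mul_comm]
      _ = 2 * Real.sqrt K := by
          rw [Real.sqrt_mul (by norm_num)]
          norm_num [Real.sqrt_eq_iff_eq_sq]

  -- pointwise Cauchy–Schwarz bound
  have hgh : ∀ x, |g x - h x| ≤ ℓ * Real.sqrt K * Real.sqrt (∑ k, (qtar x k - qstar x k) ^ 2) := by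
    intro x
    have hdiff : g x - h x = ∑ k, (qtar x k - qstar x k) * L x k := by
      rw [hgdef, hhdef, ← Finset.sum_sub_distrib]
      exact Finset.sum_congr rfl fun k _ => by ring
    have hcs : (∑ k, (qtar x k - qstar x k) * L x k) ^ 2
        ≤ (∑ k, (qtar x k - qstar x k) ^ 2) * ∑ k, L x k ^ 2 :=
      Finset.sum_mul_sq_le_sq_mul_sq _ _ _
    have hLsq : ∑ k, L x k ^ 2 ≤ (K : ℝ) * ℓ ^ 2 := by
      calc ∑ k, L x k ^ 2 ≤ ∑ _k : Fin K, ℓ ^ 2 :=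
            Finset.sum_le_sum fun k _ => pow_le_pow_left₀ (hLbound x k).1 (hLbound x k).2 2
        _ = (K : ℝ) * ℓ ^ 2 := by simp [Finset.sum_const, mul_comm]
    have hΔ0 : (0 : ℝ) ≤ ∑ k, (qtar x k - qstar x k) ^ 2 :=
      Finset.sum_nonneg fun k _ => sq_nonneg _
    calc |g x - h x| = Real.sqrt ((∑ k, (qtar x k - qstar x k) * L x k) ^ 2) := by
          rw [hdiff, Real.sqrt_sq_eq_abs]
      _ ≤ Real.sqrt ((∑ k, (qtar x k - qstar x k) ^ 2) * ((K : ℝ) * ℓ ^ 2)) := by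
          refine Real.sqrt_le_sqrt (hcs.trans ?_)
          exact mul_le_mul_of_nonneg_left hLsq hΔ0
      _ = ℓ * Real.sqrt K * Real.sqrt (∑ k, (qtar x k - qstar x k) ^ 2) := by
          rw [Real.sqrt_mul hΔ0, Real.sqrt_mul (Nat.cast_nonneg K), Real.sqrt_sq hℓ]
          ring
  -- integrability
  have hgint : Integrable g μ := hgL2.integrable one_le_two
  have hhint : Integrable h μ :=
    memLp_one_iff_integrable.mp
      (MemLp.of_bound hhmeas.aestronglyMeasurable ℓ (ae_of_all _ hhabs))
  have hΔint : Integrable (fun x => Real.sqrt (∑ k, (qtar x k - qstar x k) ^ 2)) μ := by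
    refine memLp_one_iff_integrable.mp
      (MemLp.of_bound hΔmeas.aestronglyMeasurable (2 * Real.sqrt K) (ae_of_all _ fun x => ?_))
    rw [Real.norm_eq_abs, abs_of_nonneg (Real.sqrt_nonneg _)]
    exact hΔbound x
  set I : ℝ := ∫ x, Real.sqrt (∑ k, (qtar x k - qstar x k) ^ 2) ∂μ with hIdef
  have hI0 : 0 ≤ I := integral_nonneg fun x => Real.sqrt_nonneg _
  have hbias : |∫ x, g x ∂μ - ∫ x, h x ∂μ| ≤ ℓ * Real.sqrt K * I := by
    rw [← integral_sub hgint hhint]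
    calc |∫ x, (g x - h x) ∂μ| ≤ ∫ x, |g x - h x| ∂μ := by
          simpa [Real.norm_eq_abs] using
            norm_integral_le_integral_norm (μ := μ) (fun x => g x - h x)
      _ ≤ ∫ x, ℓ * Real.sqrt K * Real.sqrt (∑ k, (qtar x k - qstar x k) ^ 2) ∂μ := by
          refine integral_mono (hgint.sub hhint).abs (hΔint.const_mul _) fun x => hgh x
      _ = ℓ * Real.sqrt K * I := by rw [integral_const_mul]
  have hbias2 : (∫ x, g x ∂μ - ∫ x, h x ∂μ) ^ 2 ≤ ℓ ^ 2 * K * I ^ 2 := by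
    have h1 : (∫ x, g x ∂μ - ∫ x, h x ∂μ) ^ 2 ≤ (ℓ * Real.sqrt K * I) ^ 2 := by
      rw [← sq_abs]
      exact pow_le_pow_left₀ (abs_nonneg _) hbias 2
    have h2 : (ℓ * Real.sqrt K * I) ^ 2 = ℓ ^ 2 * K * I ^ 2 := by
      have : Real.sqrt K ^ 2 = (K : ℝ) := Real.sq_sqrt (Nat.cast_nonneg K)
      calc (ℓ * Real.sqrt K * I) ^ 2 = ℓ ^ 2 * Real.sqrt K ^ 2 * I ^ 2 := by ring
        _ = ℓ ^ 2 * K * I ^ 2 := by rw [this]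
    linarith
  exact add_le_add_right hbias2 _
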